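/- arXiv:2604.17394 — 2 statements merged into one kernel-verified Lean document; each statement's English description precedes it below -/
import Mathlib

section
/- Let (R,Q,α) be a prelog ring. Then the functor M ↦ FDer_{(R,Q,α)}(M) on R-modules is representable: there exists an R-module FΩ_{(R,Q,α)} together with a universal log FW-derivation (w: R → FΩ_{(R,Q,α)}, wlog: Q → FΩ_{(R,Q,α)}), such that for every R-module M the map Hom_R(FΩ_{(R,Q,α)}, M) → FDer_{(R,Q,α)}(M), u ↦ (u∘w, u∘wlog), is a bijection. Explicitly, FΩ_{(R,Q,α)} is the quotient of FΩ_R ⊕ (R ⊗_ℤ Q^{gp}) by the submodule generated by (w₀(α(x)), −α(x)^p ⊗ x) for x ∈ Q, where w₀: R → FΩ_R is the universal FW-derivation. -/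
open scoped TensorProduct

/-- The polynomial `P(X,Y) = ((X+Y)^p - X^p - Y^p)/p` evaluated at `a, b`. -/
def fwP {R : Type*} [CommRing R] (p : ℕ) (a b : R) : R :=
  ∑ i ∈ Finset.Ioo 0 p, (Nat.choose p i / p : ℕ) • (a ^ i * b ^ (p - i))

/-- A Frobenius–Witt derivation. -/
structure IsFWDerivation {R M : Type*} [CommRing R] [AddCommGroup M] [Module R M]
    (p : ℕ) (D : R → M) : Prop where
  map_add' : ∀ a b : R, D (a + b) = D a + D b - fwP p a b • D (p : R)
  map_mul' : ∀ a b : R, D (a * b) = b ^ p • D a + a ^ p • D b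

/-- A logarithmic Frobenius–Witt derivation of the prelog ring `(R, Q, α)`. -/
structure IsLogFWDerivation {R M Q : Type*} [CommRing R] [AddCommGroup M] [Module R M]
    [CommMonoid Q] (p : ℕ) (α : Q →* R) (D : R → M) (δ : Q → M) : Prop where
  toFW : IsFWDerivation p D
  map_one' : δ 1 = 0
  map_mul' : ∀ x y : Q, δ (x * y) = δ x + δ y
  compat : ∀ x : Q, D (α x) = α x ^ p • δ x

/-- The congruence on `Q` identifying elements differing by a unit;
its quotient is the sharpification `Q̄ = Q/Q^×`. -/
def sharpCon (Q : Type*) [CommMonoid Q] : Con Q where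
  r x y := ∃ u : Qˣ, x = y * u
  iseqv := by
    refine ⟨fun x => ⟨1, by simp⟩, ?_, ?_⟩
    · rintro x y ⟨u, rfl⟩; exact ⟨u⁻¹, by simp⟩
    · rintro x y z ⟨u, rfl⟩ ⟨v, rfl⟩; exact ⟨v * u, by rw [Units.val_mul, mul_assoc]⟩
  mul' := by
    rintro a b c d ⟨u, rfl⟩ ⟨v, rfl⟩
    exact ⟨u * v, by rw [Units.val_mul]; exact mul_mul_mul_comm b u d v⟩

/-- An ideal of a commutative monoid. -/
def IsMonIdeal {Q : Type*} [CommMonoid Q] (I : Set Q) : Prop :=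
  ∀ a x : Q, x ∈ I → a * x ∈ I

/-- A prime ideal of a commutative monoid: an ideal whose complement is a submonoid. -/
def IsPrimeMonIdeal {Q : Type*} [CommMonoid Q] (I : Set Q) : Prop :=
  IsMonIdeal I ∧ (1 : Q) ∉ I ∧ ∀ x y : Q, x * y ∈ I → x ∈ I ∨ y ∈ I

/-- The dimension of a commutative monoid: the Krull dimension of its poset of prime ideals. -/
noncomputable def monDim (Q : Type*) [CommMonoid Q] : WithBot (WithTop ℕ) :=
  Order.krullDim {I : Set Q // IsPrimeMonIdeal I}

/-- A commutative monoid is integral (cancellative). -/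
def IsIntegralMon (Q : Type*) [CommMonoid Q] : Prop :=
  ∀ a b c : Q, a * b = a * c → b = c

/-- A commutative monoid is saturated: it is integral and whenever `x ∈ Q^{gp}` satisfies
`x^n ∈ Q` for some `n > 0`, then `x ∈ Q`; intrinsically, `a^n ∣ b^n → a ∣ b`. -/
def IsSaturatedMon (Q : Type*) [CommMonoid Q] : Prop :=
  IsIntegralMon Q ∧ ∀ (a b : Q) (n : ℕ), 0 < n → a ^ n ∣ b ^ n → a ∣ b

/-- A commutative monoid is sharp if its only unit is `1`. -/
def IsSharpMon (Q : Type*) [CommMonoid Q] : Prop :=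
  ∀ x : Q, IsUnit x → x = 1

/-- The ideal `I_α` of a prelog ring `(R, Q, α)`, generated by `α(Q⁺)`. -/
def prelogIdeal {R Q : Type*} [CommRing R] [CommMonoid Q] (α : Q →* R) : Ideal R :=
  Ideal.span (α '' {x : Q | ¬ IsUnit x})

/-- A Noetherian local ring is regular: its maximal ideal (= the ideal of nonunits) is
generated by `dim R` elements. -/
def IsRegularLocal (S : Type*) [CommRing S] : Prop :=
  IsNoetherianRing S ∧ IsLocalRing S ∧
    ∃ (n : ℕ) (s : Fin n → S),
      Ideal.span (Set.range s) = Ideal.span {x : S | ¬ IsUnit x} ∧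
      ringKrullDim S = (n : WithBot (WithTop ℕ))

/-- Log regularity of a local prelog ring `(R, Q, α)`. -/
def IsLogRegular {R Q : Type*} [CommRing R] [CommMonoid Q] (α : Q →* R) : Prop :=
  IsRegularLocal (R ⧸ prelogIdeal α) ∧
    ringKrullDim R = ringKrullDim (R ⧸ prelogIdeal α) + (id (monDim Q) : WithBot ℕ∞)

/-- the functor of log FW-derivations of a prelog ring `(R, Q, α)` is
representable by a universal log FW-derivation `(w, wlog)`. -/
theorem stmt7 (p : ℕ) (hp : p.Prime) {R Q : Type} [CommRing R] [CommMonoid Q]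
    (α : Q →* R) :
    ∃ (FΩ : ModuleCat.{0} R) (w : R → FΩ) (δ : Q → FΩ),
      IsLogFWDerivation p α w δ ∧
      ∀ (M : ModuleCat.{0} R) (D : R → M) (d : Q → M), IsLogFWDerivation p α D d →
        ∃! u : FΩ →ₗ[R] M, (∀ a : R, u (w a) = D a) ∧ ∀ x : Q, u (δ x) = d x := by
  classical
  set e : R ⊕ Q → ((R ⊕ Q) →₀ R) := fun z => Finsupp.single z 1 with he
  set S : Set ((R ⊕ Q) →₀ R) :=
    {v | (∃ a b : R, v = e (.inl (a + b)) - (e (.inl a) + e (.inl b)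
            - fwP p a b • e (.inl (p : R))))
      ∨ (∃ a b : R, v = e (.inl (a * b)) - (b ^ p • e (.inl a) + a ^ p • e (.inl b)))
      ∨ (v = e (.inr 1))
      ∨ (∃ x y : Q, v = e (.inr (x * y)) - (e (.inr x) + e (.inr y)))
      ∨ (∃ x : Q, v = e (.inl (α x)) - α x ^ p • e (.inr x))} with hS
  set N : Submodule R ((R ⊕ Q) →₀ R) := Submodule.span R S with hN
  refine ⟨ModuleCat.of R (((R ⊕ Q) →₀ R) ⧸ N),
    fun a => Submodule.Quotient.mk (e (.inl a)),
    fun x => Submodule.Quotient.mk (e (.inr x)), ?_, ?_⟩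
  · constructor
    · constructor
      · intro a b
        rw [← sub_eq_zero, ← Submodule.Quotient.mk_smul, ← Submodule.Quotient.mk_add,
          ← Submodule.Quotient.mk_sub, ← Submodule.Quotient.mk_sub,
          Submodule.Quotient.mk_eq_zero]
        refine Submodule.subset_span ?_
        exact Or.inl ⟨a, b, by module⟩
      · intro a b
        rw [← sub_eq_zero, ← Submodule.Quotient.mk_smul, ← Submodule.Quotient.mk_smul,
          ← Submodule.Quotient.mk_add, ← Submodule.Quotient.mk_sub,
          Submodule.Quotient.mk_eq_zero]
        exact Submodule.subset_span (Or.inr (Or.inl ⟨a, b, rfl⟩))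
    · rw [show (0 : ((R ⊕ Q) →₀ R) ⧸ N) = Submodule.Quotient.mk 0 from rfl,
        Submodule.Quotient.eq]
      simpa using Submodule.subset_span (R := R) (s := S) (Or.inr (Or.inr (Or.inl rfl)))
    · intro x y
      rw [← sub_eq_zero, ← Submodule.Quotient.mk_add, ← Submodule.Quotient.mk_sub,
        Submodule.Quotient.mk_eq_zero]
      exact Submodule.subset_span (Or.inr (Or.inr (Or.inr (Or.inl ⟨x, y, rfl⟩))))
    · intro x
      rw [← sub_eq_zero, ← Submodule.Quotient.mk_smul, ← Submodule.Quotient.mk_sub,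
        Submodule.Quotient.mk_eq_zero]
      exact Submodule.subset_span (Or.inr (Or.inr (Or.inr (Or.inr ⟨x, rfl⟩))))
  · intro M D d hD
    set φ : ((R ⊕ Q) →₀ R) →ₗ[R] M := Finsupp.lift M R (R ⊕ Q) (Sum.elim D d) with hφ
    have hφe : ∀ z, φ (e z) = Sum.elim D d z := by
      intro z
      simp [hφ, he, Finsupp.lift_apply, Finsupp.sum_single_index]
    have hker : N ≤ LinearMap.ker φ := by
      rw [hN, Submodule.span_le]
      rintro v (⟨a, b, rfl⟩ | ⟨a, b, rfl⟩ | rfl | ⟨x, y, rfl⟩ | ⟨x, rfl⟩) <;>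
        simp only [SetLike.mem_coe, LinearMap.mem_ker, map_sub, map_add, map_smul, hφe,
          Sum.elim_inl, Sum.elim_inr]
      · rw [hD.toFW.map_add']; abel
      · rw [hD.toFW.map_mul']; abel
      · rw [hD.map_one']
      · rw [hD.map_mul']; abel
      · rw [hD.compat]; abel
    refine ⟨N.liftQ φ hker, ⟨?_, ?_⟩, ?_⟩
    · intro a
      show N.liftQ φ hker (N.mkQ (e (.inl a))) = D a
      rw [Submodule.mkQ_apply, Submodule.liftQ_apply]
      simpa using hφe (.inl a)
    · intro x
      show N.liftQ φ hker (N.mkQ (e (.inr x))) = d x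
      rw [Submodule.mkQ_apply, Submodule.liftQ_apply]
      simpa using hφe (.inr x)
    · intro u' hu'
      apply Submodule.linearMap_qext
      apply Finsupp.lhom_ext'
      rintro (a | x) <;> apply LinearMap.ext_ring <;>
        simp only [LinearMap.comp_apply, Finsupp.lsingle_apply, Submodule.mkQ_apply,
          Submodule.liftQ_apply]
      · rw [show Finsupp.single (Sum.inl a : R ⊕ Q) (1 : R) = e (.inl a) from rfl]
        exact (hu'.1 a).trans (by simpa using (hφe (.inl a)).symm)
      · rw [show Finsupp.single (Sum.inr x : R ⊕ Q) (1 : R) = e (.inr x) from rfl]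
        exact (hu'.2 x).trans (by simpa using (hφe (.inr x)).symm)
end

section
/- Let (R,Q,α) be a prelog ring, S ⊆ Q a submonoid, T ⊆ (R,·) a multiplicative submonoid with α(S) ⊆ T. Then there are natural isomorphisms T⁻¹ F̃Ω_{(R,Q,α)} ≅ F̃Ω_{(T⁻¹R, Q, ια)} ≅ F̃Ω_{(T⁻¹R, S⁻¹Q, α̃)}, where ι: R → T⁻¹R is the localization map and α̃: S⁻¹Q → T⁻¹R is induced by α. -/
open scoped TensorProduct

lemma fwP_comm {R : Type*} [CommRing R] (p : ℕ) (a b : R) : fwP p a b = fwP p b a := by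
  unfold fwP
  refine Finset.sum_nbij' (fun i => p - i) (fun i => p - i) ?_ ?_ ?_ ?_ ?_
  · intro i hi; simp only [Finset.mem_Ioo] at hi ⊢; omega
  · intro i hi; simp only [Finset.mem_Ioo] at hi ⊢; omega
  · intro i hi; simp only [Finset.mem_Ioo] at hi; show p - (p - i) = i; omega
  · intro i hi; simp only [Finset.mem_Ioo] at hi; show p - (p - i) = i; omega
  · intro i hi; simp only [Finset.mem_Ioo] at hi
    rw [Nat.choose_symm hi.2.le, Nat.sub_sub_self hi.2.le, mul_comm]

lemma fwP_homog {R : Type*} [CommRing R] (p : ℕ) (c a b : R) :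
    fwP p (c * a) (c * b) = c ^ p * fwP p a b := by
  unfold fwP
  rw [Finset.mul_sum]
  refine Finset.sum_congr rfl fun i hi => ?_
  rw [Finset.mem_Ioo] at hi
  have h : c ^ i * c ^ (p - i) = c ^ p := by rw [← pow_add, Nat.add_sub_cancel' hi.2.le]
  rw [nsmul_eq_mul, nsmul_eq_mul, mul_pow, mul_pow]
  linear_combination ((p.choose i / p : ℕ) : R) * (a ^ i * b ^ (p - i)) * h

lemma map_fwP {R S : Type*} [CommRing R] [CommRing S] (f : R →+* S) (p : ℕ) (a b : R) :
    f (fwP p a b) = fwP p (f a) (f b) := by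
  unfold fwP
  rw [map_sum]
  refine Finset.sum_congr rfl fun i hi => ?_
  rw [nsmul_eq_mul, nsmul_eq_mul, map_mul, map_mul, map_pow, map_pow, map_natCast]

lemma fwP_spec {R : Type*} [CommRing R] {p : ℕ} (hp : p.Prime) (a b : R) :
    (a + b) ^ p = a ^ p + b ^ p + p * fwP p a b := by
  have h0 : 0 < p := hp.pos
  have hrange : Finset.range (p + 1) = insert 0 (insert p (Finset.Ioo 0 p)) := by
    ext i; simp only [Finset.mem_range, Finset.mem_insert, Finset.mem_Ioo]; omega
  have hnm1 : (0 : ℕ) ∉ insert p (Finset.Ioo 0 p) := by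
    simp only [Finset.mem_insert, Finset.mem_Ioo]; omega
  have hnm2 : p ∉ Finset.Ioo 0 p := by simp [Finset.mem_Ioo]
  rw [add_pow, hrange, Finset.sum_insert hnm1, Finset.sum_insert hnm2]
  simp only [pow_zero, Nat.sub_zero, one_mul, Nat.choose_zero_right, Nat.cast_one, mul_one,
    Nat.sub_self, Nat.choose_self]
  rw [fwP, Finset.mul_sum]
  have hcong : ∀ i ∈ Finset.Ioo 0 p, a ^ i * b ^ (p - i) * (p.choose i : R)
      = (p : R) * ((p.choose i / p : ℕ) • (a ^ i * b ^ (p - i))) := by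
    intro i hi
    rw [Finset.mem_Ioo] at hi
    have hd : (p : ℕ) ∣ p.choose i := Nat.Prime.dvd_choose_self hp (by omega) hi.2
    have hc : ((p.choose i : ℕ) : R) = (p : R) * ((p.choose i / p : ℕ) : R) := by
      rw [← Nat.cast_mul, Nat.mul_div_cancel' hd]
    rw [nsmul_eq_mul, hc]; ring
  rw [Finset.sum_congr rfl hcong]
  ring

section Part1

variable {R : Type*} [CommRing R] {T : Submonoid R}
variable {M : Type*} [AddCommGroup M] [Module (Localization T) M] [Module R M]
  [IsScalarTower R (Localization T) M]

lemma loc_inv (t : T) :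
    algebraMap R (Localization T) ↑t * Localization.mk 1 t = 1 := by
  rw [← Localization.mk_one_eq_algebraMap, Localization.mk_mul, mul_one, one_mul,
    Localization.mk_self]

lemma loc_mk_eq (a : R) (t : T) :
    (Localization.mk a t : Localization T)
      = algebraMap R (Localization T) a * Localization.mk 1 t := by
  rw [← Localization.mk_one_eq_algebraMap, Localization.mk_mul, mul_one, one_mul]

lemma loc_cancel_smul (t : T) (k : ℕ) (m : M) :
    (algebraMap R (Localization T) ↑t) ^ k • (Localization.mk 1 t : Localization T) ^ k • m
      = m := by
  rw [smul_smul, ← mul_pow, loc_inv, one_pow, one_smul]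

lemma loc_unit_cancel (t : T) (k : ℕ) {m m' : M}
    (h : (algebraMap R (Localization T) ↑t) ^ k • m
        = (algebraMap R (Localization T) ↑t) ^ k • m') :
    m = m' := by
  have h2 := congrArg (fun x => (Localization.mk 1 t : Localization T) ^ k • x) h
  rwa [smul_smul, smul_smul, ← mul_pow, mul_comm, loc_inv, one_pow, one_smul, one_smul] at h2

theorem part1 (p : ℕ) (hp : p.Prime) (hpM : ∀ m : M, p • m = 0)
    (D : R → M) (hD : IsFWDerivation p D) :
    ∃! D' : Localization T → M,
      IsFWDerivation p D' ∧ ∀ a : R, D' (algebraMap R (Localization T) a) = D a := by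
  have hsur : ∀ z : Localization T, ∃ a t, z = Localization.mk a t := fun z =>
    Localization.induction_on z fun y => ⟨y.1, y.2, rfl⟩
  have hzro : ∀ (r : R) (m : M), ((p : R) * r) • m = 0 := fun r m => by
    rw [mul_comm, mul_smul, Nat.cast_smul_eq_nsmul, hpM, smul_zero]
  have hD1 : D 1 = 0 := by
    have h := hD.map_mul' 1 1
    simp only [mul_one, one_pow, one_smul] at h
    exact left_eq_add.mp h
  -- the key computation for well-definedness
  have key : ∀ (a b : R) (t u c : T), (c : R) * (↑u * a) = ↑c * (↑t * b) →
      ((↑u * ↑c : R) ^ (2 * p)) • (((t : R) ^ p) • D a - (a ^ p) • D ↑t)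
        = ((↑t * ↑c : R) ^ (2 * p)) • (((u : R) ^ p) • D b - (b ^ p) • D ↑u) := by
    intro a b t u c hc
    have hDc := congrArg D hc
    simp only [hD.map_mul'] at hDc
    have hk : (↑c : R) ^ p * (↑u * a) ^ p = (↑c : R) ^ p * (↑t * b) ^ p := by
      rw [← mul_pow, ← mul_pow, hc]
    linear_combination (norm := module)
      (((c : R)) ^ p * (↑t : R) ^ p * (↑u : R) ^ p) • hDc
        - (((c : R)) ^ p * (↑u : R) ^ p * hk) • D (↑t : R)
        - (((c : R)) ^ p * (↑t : R) ^ p * hk) • D (↑u : R)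
        - (((↑t : R)) ^ p * (↑u : R) ^ p * hk) • D (↑c : R)
  -- the clearing computation on the raw formula
  have clear' : ∀ (a : R) (t : T) (r : R),
      (algebraMap R (Localization T) (↑t * r)) ^ (2 * p) •
          (((Localization.mk 1 t : Localization T) ^ (2 * p)) •
            (((t : R) ^ p) • D a - (a ^ p) • D ↑t))
        = (r ^ (2 * p)) • (((t : R) ^ p) • D a - (a ^ p) • D ↑t) := by
    intro a t r
    rw [map_mul, mul_pow, mul_comm ((algebraMap R (Localization T)) ↑t ^ (2 * p)), mul_smul,
      loc_cancel_smul, ← map_pow, algebraMap_smul]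
  have hwd : ∀ {a b : R} {t u : T}, Localization.r T (a, t) (b, u) →
      ((Localization.mk 1 t : Localization T) ^ (2 * p)) •
          (((t : R) ^ p) • D a - (a ^ p) • D ↑t)
        = ((Localization.mk 1 u : Localization T) ^ (2 * p)) •
          (((u : R) ^ p) • D b - (b ^ p) • D ↑u) := by
    intro a b t u hr
    obtain ⟨c, hc⟩ := Localization.r_iff_exists.mp hr
    apply loc_unit_cancel (t * (u * c)) (2 * p)
    have e1 : ((t * (u * c) : T) : R) = ↑t * (↑u * ↑c) := by push_cast; ring
    have e2 : ((t * (u * c) : T) : R) = ↑u * (↑t * ↑c) := by push_cast; ring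
    calc (algebraMap R (Localization T) ↑(t * (u * c))) ^ (2 * p) •
            ((Localization.mk 1 t : Localization T) ^ (2 * p)) •
              (((t : R) ^ p) • D a - (a ^ p) • D ↑t)
        = ((↑u * ↑c : R) ^ (2 * p)) • (((t : R) ^ p) • D a - (a ^ p) • D ↑t) := by
          rw [e1]; exact clear' a t (↑u * ↑c)
      _ = ((↑t * ↑c : R) ^ (2 * p)) • (((u : R) ^ p) • D b - (b ^ p) • D ↑u) := key a b t u c hc
      _ = _ := by rw [e2]; exact (clear' b u (↑t * ↑c)).symm
  set D' : Localization T → M := fun x => Localization.liftOn x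
    (fun a t => ((Localization.mk 1 t : Localization T) ^ (2 * p)) •
      (((t : R) ^ p) • D a - (a ^ p) • D ↑t)) hwd with hD'def
  have hmk : ∀ (a : R) (t : T), D' (Localization.mk a t)
      = ((Localization.mk 1 t : Localization T) ^ (2 * p)) •
        (((t : R) ^ p) • D a - (a ^ p) • D ↑t) := fun a t => rfl
  have hclear : ∀ (a : R) (t : T) (w : Localization T),
      ((algebraMap R (Localization T) ↑t) ^ (2 * p) * w) • D' (Localization.mk a t)
        = w • (((t : R) ^ p) • D a - (a ^ p) • D ↑t) := by
    intro a t w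
    rw [hmk, mul_comm, mul_smul, loc_cancel_smul]
  have hres : ∀ a : R, D' (algebraMap R (Localization T) a) = D a := by
    intro a
    rw [← Localization.mk_one_eq_algebraMap, hmk]
    simp [Localization.mk_one, OneMemClass.coe_one, hD1]
  have hscal : ∀ (b : R) (u : T),
      (algebraMap R (Localization T) ↑u) ^ (2 * p) * (Localization.mk b u : Localization T) ^ p
        = algebraMap R (Localization T) (b ^ p * ↑u ^ p) := by
    intro b u
    have h1 : (algebraMap R (Localization T) ↑u) ^ 2 * Localization.mk b u
        = algebraMap R (Localization T) (b * ↑u) := by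
      rw [loc_mk_eq, map_mul]
      linear_combination (algebraMap R (Localization T) ↑u * algebraMap R (Localization T) b)
        * loc_inv u
    calc (algebraMap R (Localization T) ↑u) ^ (2 * p) * (Localization.mk b u : Localization T) ^ p
        = ((algebraMap R (Localization T) ↑u) ^ 2 * Localization.mk b u) ^ p := by
          rw [mul_pow, ← pow_mul]
      _ = (algebraMap R (Localization T) (b * ↑u)) ^ p := by rw [h1]
      _ = _ := by rw [← map_pow, mul_pow]
  have hmul : ∀ x y : Localization T, D' (x * y) = y ^ p • D' x + x ^ p • D' y := by
    intro x y
    obtain ⟨a, t, rfl⟩ := hsur x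
    obtain ⟨b, u, rfl⟩ := hsur y
    rw [Localization.mk_mul]
    apply loc_unit_cancel (t * u) (2 * p)
    have hL : (algebraMap R (Localization T) ↑(t * u)) ^ (2 * p) •
          D' (Localization.mk (a * b) (t * u))
        = (((t * u : T) : R) ^ p) • D (a * b) - ((a * b) ^ p) • D ↑(t * u) := by
      rw [hmk]; exact loc_cancel_smul (t * u) (2 * p) _
    rw [smul_add, hL]
    have h1 : (algebraMap R (Localization T) ↑(t * u)) ^ (2 * p) •
          ((Localization.mk b u : Localization T) ^ p • D' (Localization.mk a t))
        = (b ^ p * (u : R) ^ p) • (((t : R) ^ p) • D a - (a ^ p) • D ↑t) := by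
      rw [smul_smul, Submonoid.coe_mul, map_mul, mul_pow, mul_assoc, hclear, hscal,
        algebraMap_smul]
    have h2 : (algebraMap R (Localization T) ↑(t * u)) ^ (2 * p) •
          ((Localization.mk a t : Localization T) ^ p • D' (Localization.mk b u))
        = (a ^ p * (t : R) ^ p) • (((u : R) ^ p) • D b - (b ^ p) • D ↑u) := by
      rw [smul_smul, Submonoid.coe_mul, map_mul, mul_pow,
        mul_comm ((algebraMap R (Localization T)) ↑t ^ (2 * p)), mul_assoc, hclear, hscal,
        algebraMap_smul]
    rw [h1, h2, Submonoid.coe_mul, hD.map_mul' a b, hD.map_mul' (↑t : R) (↑u : R)]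
    module
  have hDp : D' ((p : ℕ) : Localization T) = D ((p : ℕ) : R) := by
    rw [← map_natCast (algebraMap R (Localization T)) p, hres]
  have hadd : ∀ x y : Localization T,
      D' (x + y) = D' x + D' y - fwP p x y • D' ((p : ℕ) : Localization T) := by
    intro x y
    obtain ⟨a, t, rfl⟩ := hsur x
    obtain ⟨b, u, rfl⟩ := hsur y
    rw [Localization.add_mk, hDp]
    apply loc_unit_cancel (t * u) (2 * p)
    have heX : algebraMap R (Localization T) ↑(t * u) * Localization.mk a t
        = algebraMap R (Localization T) (↑u * a) := by
      rw [Submonoid.coe_mul, map_mul, loc_mk_eq, map_mul]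
      linear_combination (algebraMap R (Localization T) ↑u * algebraMap R (Localization T) a)
        * loc_inv t
    have heY : algebraMap R (Localization T) ↑(t * u) * Localization.mk b u
        = algebraMap R (Localization T) (↑t * b) := by
      rw [Submonoid.coe_mul, map_mul, loc_mk_eq, map_mul]
      linear_combination (algebraMap R (Localization T) ↑t * algebraMap R (Localization T) b)
        * loc_inv u
    have hfw : (algebraMap R (Localization T) ↑(t * u)) ^ (2 * p) *
          fwP p (Localization.mk a t) (Localization.mk b u)
        = algebraMap R (Localization T) ((↑t * ↑u : R) ^ p * fwP p (↑u * a) (↑t * b)) := by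
      have h2 := fwP_homog p (algebraMap R (Localization T) ↑(t * u))
        (Localization.mk a t) (Localization.mk b u)
      rw [heX, heY] at h2
      rw [two_mul, pow_add, mul_assoc, ← h2]
      conv_rhs => rw [map_mul, map_pow, map_fwP, map_mul]
      rw [Submonoid.coe_mul, map_mul]
    have hP0 : (algebraMap R (Localization T) ↑(t * u)) ^ (2 * p) •
          D' (Localization.mk (↑t * b + ↑u * a) (t * u))
        = (((t * u : T) : R) ^ p) • D (↑t * b + ↑u * a)
            - ((↑t * b + ↑u * a) ^ p) • D ↑(t * u) := by
      rw [hmk]; exact loc_cancel_smul (t * u) (2 * p) _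
    have hP1 : (algebraMap R (Localization T) ↑(t * u)) ^ (2 * p) • D' (Localization.mk a t)
        = (((u : R)) ^ (2 * p)) • (((t : R) ^ p) • D a - (a ^ p) • D ↑t) := by
      rw [Submonoid.coe_mul, map_mul, mul_pow, hclear, ← map_pow, algebraMap_smul]
    have hP2 : (algebraMap R (Localization T) ↑(t * u)) ^ (2 * p) • D' (Localization.mk b u)
        = (((t : R)) ^ (2 * p)) • (((u : R) ^ p) • D b - (b ^ p) • D ↑u) := by
      rw [Submonoid.coe_mul, map_mul, mul_pow,
        mul_comm ((algebraMap R (Localization T)) ↑t ^ (2 * p)), hclear, ← map_pow,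
        algebraMap_smul]
    have hP3 : (algebraMap R (Localization T) ↑(t * u)) ^ (2 * p) •
          (fwP p (Localization.mk a t) (Localization.mk b u) • D ((p : ℕ) : R))
        = ((↑t * ↑u : R) ^ p * fwP p (↑u * a) (↑t * b)) • D ((p : ℕ) : R) := by
      rw [smul_smul, hfw, algebraMap_smul]
    rw [smul_sub, smul_add, hP0, hP1, hP2, hP3, Submonoid.coe_mul,
      hD.map_add' (↑t * b) (↑u * a), hD.map_mul' (↑t : R) b, hD.map_mul' (↑u : R) a,
      hD.map_mul' (↑t : R) (↑u : R), fwP_spec hp (↑t * b) (↑u * a),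
      fwP_comm p (↑u * a) (↑t * b)]
    linear_combination (norm := module)
      - hzro (fwP p ((↑t : R) * b) (↑u * a) * (↑u : R) ^ p) (D (↑t : R))
        - hzro (fwP p ((↑t : R) * b) (↑u * a) * (↑t : R) ^ p) (D (↑u : R))
  have hchar : ∀ (F : Localization T → M),
      (∀ x y, F (x * y) = y ^ p • F x + x ^ p • F y) →
      (∀ r, F (algebraMap R (Localization T) r) = D r) →
      ∀ (a : R) (t : T), (algebraMap R (Localization T) ↑t) ^ p • F (Localization.mk a t)
        = D a - (Localization.mk a t : Localization T) ^ p • D ↑t := by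
    intro F hm hr a t
    have h1 : (Localization.mk a t : Localization T) * algebraMap R (Localization T) ↑t
        = algebraMap R (Localization T) a := by
      rw [loc_mk_eq]
      linear_combination (algebraMap R (Localization T) a) * loc_inv t
    have h2 := hm (Localization.mk a t) (algebraMap R (Localization T) ↑t)
    rw [h1, hr, hr] at h2
    rw [h2]; abel
  refine ⟨D', ⟨⟨hadd, hmul⟩, hres⟩, ?_⟩
  rintro F ⟨hF, hFres⟩
  funext x
  obtain ⟨a, t, rfl⟩ := hsur x
  apply loc_unit_cancel t p
  rw [hchar F hF.map_mul' hFres a t, hchar D' hmul hres a t]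

end Part1

/-- log FW-derivations mod `p` of `(R,Q,α)`, `(T⁻¹R,Q,ια)` and
`(T⁻¹R, S⁻¹Q, α̃)` correspond bijectively, expressing
`T⁻¹F̃Ω_{(R,Q,α)} ≅ F̃Ω_{(T⁻¹R,Q,ια)} ≅ F̃Ω_{(T⁻¹R,S⁻¹Q,α̃)}`. -/
theorem stmt16 (p : ℕ) (hp : p.Prime) {R Q : Type*} [CommRing R] [CommMonoid Q]
    (α : Q →* R) (S : Submonoid Q) (T : Submonoid R) (hST : ∀ x ∈ S, α x ∈ T)
    (αt : Localization S →* Localization T)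
    (hαt : ∀ x : Q, αt (Localization.mk x 1) = Localization.mk (α x) 1)
    {M : Type*} [AddCommGroup M] [Module (Localization T) M] [Module R M]
    [IsScalarTower R (Localization T) M] (hpM : ∀ m : M, p • m = 0) :
    (∀ (D : R → M) (δ : Q → M), IsLogFWDerivation p α D δ →
      ∃! D' : Localization T → M,
        IsLogFWDerivation p ((algebraMap R (Localization T)).toMonoidHom.comp α) D' δ ∧
        ∀ a : R, D' (algebraMap R (Localization T) a) = D a) ∧
    ∀ (D' : Localization T → M) (δ : Q → M),
      IsLogFWDerivation p ((algebraMap R (Localization T)).toMonoidHom.comp α) D' δ →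
        ∃! δ' : Localization S → M,
          IsLogFWDerivation p αt D' δ' ∧ ∀ x : Q, δ' (Localization.mk x 1) = δ x := by
  constructor
  · -- Part 1
    intro D δ hDδ
    obtain ⟨D', ⟨hD'fw, hD'res⟩, huniq⟩ := part1 (T := T) p hp hpM D hDδ.toFW
    refine ⟨D', ⟨⟨hD'fw, hDδ.map_one', hDδ.map_mul', ?_⟩, hD'res⟩, ?_⟩
    · intro x
      have hcomp : ((algebraMap R (Localization T)).toMonoidHom.comp α) x
          = algebraMap R (Localization T) (α x) := rfl
      rw [hcomp, hD'res, hDδ.compat x,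
        ← map_pow (algebraMap R (Localization T)) (α x) p, algebraMap_smul]
    · rintro F ⟨hF, hFres⟩
      exact huniq F ⟨hF.toFW, hFres⟩
  · -- Part 2
    intro D' δ hD'
    have hsur : ∀ z : Localization S, ∃ x s, z = Localization.mk x s := fun z =>
      Localization.induction_on z fun y => ⟨y.1, y.2, rfl⟩
    have hδm := hD'.map_mul'
    have hwd : ∀ {x y : Q} {s u : S}, Localization.r S (x, s) (y, u) →
        δ x - δ ↑s = δ y - δ ↑u := by
      intro x y s u hr
      obtain ⟨c, hc⟩ := Localization.r_iff_exists.mp hr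
      have h' := congrArg δ hc
      rw [hδm, hδm, hδm, hδm] at h'
      have h2 := add_left_cancel h'
      rw [sub_eq_sub_iff_add_eq_add, add_comm (δ x), add_comm (δ y)]
      exact h2
    set δ' : Localization S → M := fun z =>
      Localization.liftOn z (fun x s => δ x - δ ↑s) hwd with hδ'def
    have hmkδ : ∀ (x : Q) (s : S), δ' (Localization.mk x s) = δ x - δ ↑s := fun x s => rfl
    have hα1 : ∀ (x : Q) (s : S), αt (Localization.mk x s)
        = algebraMap R (Localization T) (α x) * αt (Localization.mk 1 s) := by
      intro x s
      rw [show (Localization.mk x s : Localization S)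
            = Localization.mk x 1 * Localization.mk 1 s by
          rw [Localization.mk_mul, mul_one, one_mul],
        map_mul, hαt, Localization.mk_one_eq_algebraMap]
    have hαinv : ∀ s : S, algebraMap R (Localization T) (α ↑s) * αt (Localization.mk 1 s) = 1 := by
      intro s
      rw [← Localization.mk_one_eq_algebraMap, ← hαt ↑s, ← map_mul, Localization.mk_mul,
        mul_one, one_mul, Localization.mk_self, map_one]
    have hD'1 : D' (1 : Localization T) = 0 := by
      have h := hD'.toFW.map_mul' 1 1
      simp only [mul_one, one_pow, one_smul] at h
      exact left_eq_add.mp h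
    have hcomp : ∀ x : Q, D' (algebraMap R (Localization T) (α x))
        = (algebraMap R (Localization T) (α x)) ^ p • δ x := fun x => hD'.compat x
    have hDw : ∀ s : S, D' (αt (Localization.mk 1 s))
        = -(((αt (Localization.mk 1 s)) ^ (2 * p)
            * (algebraMap R (Localization T) (α ↑s)) ^ p) • δ ↑s) := by
      intro s
      have hvw : algebraMap R (Localization T) (α ↑s) * αt (Localization.mk 1 s) = 1 := hαinv s
      have h0 : (αt (Localization.mk 1 s)) ^ p • D' (algebraMap R (Localization T) (α ↑s))
          + (algebraMap R (Localization T) (α ↑s)) ^ p • D' (αt (Localization.mk 1 s)) = 0 := by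
        rw [← hD'.toFW.map_mul', hvw, hD'1]
      have hDv : D' (algebraMap R (Localization T) (α ↑s))
          = (algebraMap R (Localization T) (α ↑s)) ^ p • δ ↑s := hcomp ↑s
      calc D' (αt (Localization.mk 1 s))
          = ((αt (Localization.mk 1 s)) ^ p * (algebraMap R (Localization T) (α ↑s)) ^ p) •
              D' (αt (Localization.mk 1 s)) := by
            rw [← mul_pow, mul_comm (αt (Localization.mk 1 s)), hvw, one_pow, one_smul]
        _ = (αt (Localization.mk 1 s)) ^ p • ((algebraMap R (Localization T) (α ↑s)) ^ p •
              D' (αt (Localization.mk 1 s))) := by rw [mul_smul]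
        _ = (αt (Localization.mk 1 s)) ^ p •
              (-((αt (Localization.mk 1 s)) ^ p • D' (algebraMap R (Localization T) (α ↑s)))) := by
            exact congrArg (fun m => αt (Localization.mk 1 s) ^ p • m)
              (eq_neg_of_add_eq_zero_right h0)
        _ = _ := by rw [hDv, smul_neg, smul_smul, smul_smul, ← pow_add, two_mul]
    have hcompat : ∀ z : Localization S, D' (αt z) = (αt z) ^ p • δ' z := by
      intro z
      obtain ⟨x, s, rfl⟩ := hsur z
      have hvwp : (algebraMap R (Localization T) (α ↑s)) ^ p * (αt (Localization.mk 1 s)) ^ p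
          = 1 := by rw [← mul_pow, hαinv s, one_pow]
      have e2 : (algebraMap R (Localization T)) (α x) ^ p
            * ((αt (Localization.mk 1 s)) ^ (2 * p)
              * (algebraMap R (Localization T) (α ↑s)) ^ p)
          = (algebraMap R (Localization T)) (α x) ^ p * (αt (Localization.mk 1 s)) ^ p := by
        rw [two_mul, pow_add]
        linear_combination ((algebraMap R (Localization T)) (α x) ^ p
          * (αt (Localization.mk 1 s)) ^ p) * hvwp
      rw [hmkδ, hα1 x s, hD'.toFW.map_mul', hcomp, hDw, smul_sub, mul_pow, smul_smul, smul_neg,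
        smul_smul, mul_comm (αt (Localization.mk 1 s) ^ p), e2]
      abel
    refine ⟨δ', ⟨⟨hD'.toFW, ?_, ?_, hcompat⟩, fun x => ?_⟩, ?_⟩
    · show δ' 1 = 0
      rw [← Localization.mk_one, hmkδ, OneMemClass.coe_one, sub_self]
    · intro z w
      obtain ⟨x, s, rfl⟩ := hsur z
      obtain ⟨y, u, rfl⟩ := hsur w
      rw [Localization.mk_mul, hmkδ, hmkδ, hmkδ, hδm, Submonoid.coe_mul, hδm]
      abel
    · rw [hmkδ, OneMemClass.coe_one, hD'.map_one', sub_zero]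
    · rintro F ⟨hF, hFval⟩
      funext z
      obtain ⟨x, s, rfl⟩ := hsur z
      have h1 : (Localization.mk x s : Localization S)
          = Localization.mk x 1 * Localization.mk 1 s := by
        rw [Localization.mk_mul, mul_one, one_mul]
      have hsinv : F (Localization.mk 1 s) = -δ ↑s := by
        have h2 : (Localization.mk ↑s 1 : Localization S) * Localization.mk 1 s = 1 := by
          rw [Localization.mk_mul, mul_one, one_mul, Localization.mk_self]
        have h3 := hF.map_mul' (Localization.mk ↑s 1) (Localization.mk 1 s)
        rw [h2, hF.map_one', hFval] at h3
        have h4 := h3.symm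
        rw [add_comm] at h4
        exact eq_neg_of_add_eq_zero_left h4
      rw [hmkδ, h1, hF.map_mul', hFval, hsinv]
      abel
end
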